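/- Let t_s ∈ ℝ, k > 0, and let V : [t_s, ∞) → [0, ∞) be continuous. Assume that for every t ≥ t_s with V(t) > 0, the upper right Dini derivative satisfies D⁺V(t) ≤ −k √(V(t)), and that V is nonincreasing where V = 0 is attained (e.g. D⁺V(t) ≤ 0 for all t ≥ t_s). Then V(t) = 0 for every t ≥ t_s + (2/k) √(V(t_s)). -/

import Mathlib

open Set Filter

noncomputable section

/-- Upper right Dini derivative `D⁺h(t) = limsup_{s→0⁺}(h(t+s) − h(t))/s`, with values
in the extended reals. -/
def diniUR (h : ℝ → ℝ) (t : ℝ) : EReal :=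
  limsup (fun s => (((h (t + s) - h t) / s : ℝ) : EReal)) (nhdsWithin 0 (Ioi 0))

/-- From a bound on the Dini derivative, extract frequent (indeed eventual) slope bounds. -/
lemma slope_of_diniUR {V : ℝ → ℝ} {x c : ℝ} (h : diniUR V x ≤ ((c : ℝ) : EReal)) :
    ∀ r, c < r → ∃ᶠ z in nhdsWithin x (Ioi x), slope V x z < r := by
  intro r hr
  have h1 : limsup (fun s => (((V (x + s) - V x) / s : ℝ) : EReal)) (nhdsWithin 0 (Ioi 0))
      < ((r : ℝ) : EReal) := lt_of_le_of_lt h (by exact_mod_cast hr)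
  have h2 : ∀ᶠ s in nhdsWithin 0 (Ioi 0),
      (((V (x + s) - V x) / s : ℝ) : EReal) < ((r : ℝ) : EReal) :=
    Filter.eventually_lt_of_limsup_lt h1
  have h3 : ∀ᶠ s in nhdsWithin 0 (Ioi 0), (V (x + s) - V x) / s < r := by
    filter_upwards [h2] with s hs
    exact_mod_cast hs
  have htend : Tendsto (fun z : ℝ => z - x) (nhdsWithin x (Ioi x)) (nhdsWithin 0 (Ioi 0)) := by
    apply tendsto_nhdsWithin_of_tendsto_nhds_of_eventually_within
    · have h0 : Tendsto (fun z : ℝ => z - x) (nhds x) (nhds (x - x)) :=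
        (continuous_sub_right x).tendsto x
      rw [sub_self] at h0
      exact h0.mono_left nhdsWithin_le_nhds
    · filter_upwards [self_mem_nhdsWithin] with z hz
      simpa [sub_pos] using hz
  have h4 : ∀ᶠ z in nhdsWithin x (Ioi x), slope V x z < r := by
    filter_upwards [htend.eventually h3] with z hz
    rw [slope_def_field]
    simpa [div_eq_div_iff] using hz
  exact h4.frequently

/-- The finite-time convergence comparison argument of Section 6 of the paper:
`D⁺V ≤ −k√V` where `V > 0` (and `D⁺V ≤ 0` everywhere) forces `V` to vanish after the
finite time `t_s + (2/k)√V(t_s)`. -/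
theorem stmt17 (ts k : ℝ) (hk : 0 < k) (V : ℝ → ℝ)
    (hcont : ContinuousOn V (Ici ts)) (hnonneg : ∀ t : ℝ, ts ≤ t → 0 ≤ V t)
    (hdini : ∀ t : ℝ, ts ≤ t → 0 < V t →
      diniUR V t ≤ ((-k * Real.sqrt (V t) : ℝ) : EReal))
    (hmono : ∀ t : ℝ, ts ≤ t → diniUR V t ≤ ((0 : ℝ) : EReal)) :
    ∀ t : ℝ, ts + (2 / k) * Real.sqrt (V ts) ≤ t → V t = 0 := by
  set c := Real.sqrt (V ts) with hc
  have hc0 : 0 ≤ c := Real.sqrt_nonneg _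
  -- V is nonincreasing on [ts, ∞)
  have anti : ∀ x y : ℝ, ts ≤ x → x ≤ y → V y ≤ V x := by
    intro x y hx hxy
    have := image_le_of_liminf_slope_right_le_deriv_boundary
      (f := V) (a := x) (b := y) (B := fun _ => V x) (B' := fun _ => 0)
      (hcont.mono (fun z hz => le_trans hx hz.1)) le_rfl continuousOn_const
      (fun z _ => hasDerivWithinAt_const z _ _)
      (fun z hz r hr => slope_of_diniUR (hmono z (le_trans hx hz.1)) r hr)
    exact this (right_mem_Icc.2 hxy)
  -- For each ε ∈ (0, k), V vanishes at ts + 2c/(k-ε)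
  have key : ∀ ε : ℝ, 0 < ε → ε < k → V (ts + 2 * c / (k - ε)) = 0 := by
    intro ε hε hεk
    set κ := k - ε with hκ
    have hκ0 : 0 < κ := by simp [hκ]; linarith
    set b := ts + 2 * c / κ with hb
    have htsb : ts ≤ b := by
      have h0 : 0 ≤ 2 * c / κ := div_nonneg (by linarith) hκ0.le
      rw [hb]; linarith
    set B : ℝ → ℝ := fun t => (c - κ / 2 * (t - ts)) ^ 2 with hB
    set B' : ℝ → ℝ := fun t => -κ * (c - κ / 2 * (t - ts)) with hB'
    have hBderiv : ∀ x : ℝ, HasDerivAt B (B' x) x := by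
      intro x
      have h1 : HasDerivAt (fun t : ℝ => c - κ / 2 * (t - ts)) (-(κ / 2)) x := by
        simpa using (((hasDerivAt_id x).sub_const ts).const_mul (κ / 2)).const_sub c
      have := h1.fun_pow 2
      refine this.congr_deriv ?_
      simp [hB']; ring
    have hle := image_le_of_liminf_slope_right_lt_deriv_boundary
      (f := V) (f' := fun x => -k * Real.sqrt (V x)) (a := ts) (b := b)
      (hcont.mono (fun z hz => hz.1)) ?_ ?_ hBderiv ?_
    · -- conclude V b ≤ B b = 0
      have hVb := hle (right_mem_Icc.2 htsb)
      have hBb : B b = 0 := by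
        have h0 : c - κ / 2 * (b - ts) = 0 := by
          rw [hb]; field_simp; ring
        simp [hB, h0]
      have := hnonneg b htsb
      rw [hBb] at hVb
      linarith
    · -- slope bound
      intro x hx r hr
      by_cases hV : 0 < V x
      · exact slope_of_diniUR (hdini x hx.1 hV) r hr
      · have hV0 : V x = 0 := le_antisymm (not_lt.1 hV) (hnonneg x hx.1)
        have hr' : -k * Real.sqrt (V x) < r := hr
        rw [hV0] at hr'
        simp at hr'
        exact slope_of_diniUR (hmono x hx.1) r hr'
    · -- V ts ≤ B ts
      have h0 : B ts = V ts := by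
        simp [hB, hc, Real.sq_sqrt (hnonneg ts le_rfl)]
      rw [h0]
    · -- strict bound at contact points
      intro x hx hVx
      have hxb : x < ts + 2 * c / κ := by have := hx.2; rwa [hb] at this
      have hpos : 0 < c - κ / 2 * (x - ts) := by
        have h1 : x - ts < 2 * c / κ := by linarith
        have h2 : (x - ts) * κ < 2 * c := (lt_div_iff₀ hκ0).1 h1
        nlinarith
      have hBx : Real.sqrt (B x) = c - κ / 2 * (x - ts) := by
        rw [hB]; exact Real.sqrt_sq hpos.le
      have hVpos : 0 < V x := by rw [hVx, hB]; positivity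
      have hsq : Real.sqrt (V x) = c - κ / 2 * (x - ts) := by rw [hVx]; exact hBx
      simp only [hB']
      rw [hsq]
      have hκk : κ < k := by rw [hκ]; linarith
      nlinarith
  -- conclude
  intro t ht
  rcases eq_or_lt_of_le hc0 with hc0' | hcpos
  · -- c = 0
    have h1 : V (ts + 2 * c / (k - k / 2)) = 0 := key (k / 2) (by linarith) (by linarith)
    rw [← hc0'] at h1
    simp at h1
    have hts_t : ts ≤ t := by rw [← hc0'] at ht; simpa using ht
    have := anti ts t le_rfl hts_t
    have := hnonneg t hts_t
    linarith [h1 ▸ (anti ts t le_rfl hts_t)]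
  · set t0 := ts + 2 / k * c with ht0
    have ht0ts : ts ≤ t0 := by
      have h0 : 0 ≤ 2 / k * c := mul_nonneg (by positivity) hc0
      rw [ht0]; linarith
    -- V = 0 for every u > t0
    have hgt : ∀ u : ℝ, t0 < u → V u = 0 := by
      intro u hu
      have huts : ts < u := lt_of_le_of_lt ht0ts hu
      have h2c : 2 * c / (u - ts) < k := by
        rw [div_lt_iff₀ (by linarith)]
        have : 2 / k * c < u - ts := by rw [ht0] at hu; linarith
        calc 2 * c = k * (2 / k * c) := by field_simp
          _ < k * (u - ts) := by
              exact mul_lt_mul_of_pos_left this hk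
      set ε := (k - 2 * c / (u - ts)) / 2 with hεdef
      have hεpos : 0 < ε := by simp [hεdef]; linarith
      have hεlt : ε < k := by
        have h2cpos : 0 < 2 * c / (u - ts) := div_pos (by linarith) (by linarith)
        simp [hεdef]; linarith
      have hkey := key ε hεpos hεlt
      have hble : ts + 2 * c / (k - ε) ≤ u := by
        have hkε : k - ε = (k + 2 * c / (u - ts)) / 2 := by rw [hεdef]; ring
        have hkεgt : 2 * c / (u - ts) < k - ε := by
          rw [hkε]
          have h2cpos : 0 ≤ 2 * c / (u - ts) := div_nonneg (by linarith) (by linarith)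
          linarith
        have : 2 * c / (k - ε) < u - ts := by
          rw [div_lt_iff₀ (by linarith)]
          have := (div_lt_iff₀ (show (0:ℝ) < u - ts by linarith)).1 hkεgt
          linarith
        linarith
      have hbts : ts ≤ ts + 2 * c / (k - ε) := by
        have : 0 ≤ 2 * c / (k - ε) := div_nonneg (by linarith) (by linarith)
        linarith
      have := anti _ u hbts hble
      rw [hkey] at this
      exact le_antisymm this (hnonneg u (le_trans hbts hble))
    rcases eq_or_lt_of_le ht with heq | hlt
    · -- t = t0: use right-continuity
      have hVt0 : ContinuousWithinAt V (Ici ts) t0 := hcont t0 ht0ts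
      have h1 : Tendsto V (nhdsWithin t0 (Ioi t0)) (nhds (V t0)) :=
        hVt0.tendsto.mono_left (nhdsWithin_mono t0 (fun z hz => le_trans ht0ts (le_of_lt hz)))
      have h2 : Tendsto V (nhdsWithin t0 (Ioi t0)) (nhds 0) := by
        apply Tendsto.congr' _ tendsto_const_nhds
        filter_upwards [self_mem_nhdsWithin] with z hz
        exact (hgt z hz).symm
      have := tendsto_nhds_unique h1 h2
      rw [← heq]
      exact this
    · exact hgt t hlt
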